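/- Let R be a unique factorization domain whose fraction field L has characteristic different from two. Let a₁, a₂ ∈ R and suppose the polynomials fᵢ = xᵢ² − aᵢ are irreducible in L[xᵢ] for i = 1,2. If T = R[x₁,x₂]/(f₁, f₂) is not an integral domain, then there exist nonzero elements c, d, u ∈ R with a₁ = d²u and a₂ = c²u, where c and d are relatively prime (their only common divisors are units). -/

import Mathlib

open Polynomial

lemma irr_sq_iff {F : Type*} [Field F] (a : F) :
    Irreducible (X ^ 2 - C a : F[X]) ↔ ∀ t : F, t ^ 2 ≠ a := by
  have hm : (X ^ 2 - C a : F[X]).Monic := monic_X_pow_sub_C a two_ne_zero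
  have hd : (X ^ 2 - C a : F[X]).natDegree = 2 := by
    simpa using natDegree_X_pow_sub_C (n := 2) (a := a)
  rw [hm.irreducible_iff_roots_eq_zero_of_degree_le_three (by omega) (by omega),
    Multiset.eq_zero_iff_forall_notMem]
  constructor
  · intro h t ht
    exact h t (by rw [mem_roots hm.ne_zero]; simp [IsRoot, ht])
  · intro h t ht
    rw [mem_roots hm.ne_zero] at ht
    simp only [IsRoot, eval_sub, eval_pow, eval_X, eval_C, sub_eq_zero] at ht
    exact h t ht

lemma root_sq {F : Type*} [CommRing F] (a : F) :
    (AdjoinRoot.root (X ^ 2 - C a)) ^ 2 = AdjoinRoot.of _ a := by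
  have := AdjoinRoot.eval₂_root (X ^ 2 - C a : F[X])
  simp only [eval₂_sub, eval₂_pow, eval₂_X, eval₂_C, sub_eq_zero] at this
  exact this

lemma indep {F : Type*} [Field F] {a : F} (h : Irreducible (X ^ 2 - C a : F[X]))
    (x y : F)
    (hxy : AdjoinRoot.of _ x + AdjoinRoot.of _ y * AdjoinRoot.root (X ^ 2 - C a) = 0) :
    x = 0 ∧ y = 0 := by
  haveI := Fact.mk h
  have hinj : Function.Injective (AdjoinRoot.of (X ^ 2 - C a)) :=
    RingHom.injective (AdjoinRoot.of (X ^ 2 - C a))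
  by_cases hy : y = 0
  · subst hy
    simp only [map_zero, zero_mul, add_zero] at hxy
    exact ⟨hinj (by simpa using hxy), rfl⟩
  · exfalso
    have hroot : AdjoinRoot.root (X ^ 2 - C a) = AdjoinRoot.of _ (-x / y) := by
      have hy' : (AdjoinRoot.of (X ^ 2 - C a)) y ≠ 0 := fun hh => hy (hinj (by simpa using hh))
      rw [map_div₀, eq_div_iff hy', map_neg]
      linear_combination hxy
    have : (-x / y) ^ 2 = a := by
      apply hinj
      rw [map_pow, ← hroot, root_sq]
    exact (irr_sq_iff a).mp h _ this

lemma repr_lemma {F : Type*} [Field F] (a : F) (t : AdjoinRoot (X ^ 2 - C a)) :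
    ∃ x y : F, t = AdjoinRoot.of _ x + AdjoinRoot.of _ y * AdjoinRoot.root _ := by
  obtain ⟨p, rfl⟩ := AdjoinRoot.mk_surjective t
  set f : F[X] := X ^ 2 - C a with hf
  have hm : f.Monic := monic_X_pow_sub_C a two_ne_zero
  have hmod : AdjoinRoot.mk f p = AdjoinRoot.mk f (p %ₘ f) := by
    conv_lhs => rw [← modByMonic_add_div p f]
    rw [map_add, map_mul, AdjoinRoot.mk_self, zero_mul, add_zero]
  have hdeg : (p %ₘ f).degree ≤ 1 := by
    have h2 : f.degree = 2 := by
      simpa using degree_X_pow_sub_C (n := 2) (by norm_num) a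
    have := degree_modByMonic_lt p hm
    rw [h2] at this
    exact Order.le_of_lt_succ (by exact_mod_cast this)
  refine ⟨(p %ₘ f).coeff 0, (p %ₘ f).coeff 1, ?_⟩
  have hrepr := eq_X_add_C_of_degree_le_one hdeg
  rw [hmod]
  conv_lhs => rw [hrepr]
  simp only [map_add, map_mul, AdjoinRoot.mk_C, AdjoinRoot.mk_X]
  rw [add_comm]

lemma normal_form {R : Type*} [CommRing R] (a₁ a₂ : R) (p : MvPolynomial (Fin 2) R) :
    ∃ α β γ δ : R, p - (MvPolynomial.C α + MvPolynomial.C β * MvPolynomial.X 0 +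
      MvPolynomial.C γ * MvPolynomial.X 1 +
      MvPolynomial.C δ * (MvPolynomial.X 0 * MvPolynomial.X 1)) ∈
      (Ideal.span {MvPolynomial.X 0 ^ 2 - MvPolynomial.C a₁,
        MvPolynomial.X 1 ^ 2 - MvPolynomial.C a₂} : Ideal (MvPolynomial (Fin 2) R)) := by
  set I : Ideal (MvPolynomial (Fin 2) R) := Ideal.span {MvPolynomial.X 0 ^ 2 - MvPolynomial.C a₁,
        MvPolynomial.X 1 ^ 2 - MvPolynomial.C a₂} with hI
  have hm1 : (MvPolynomial.X 0 ^ 2 - MvPolynomial.C a₁ : MvPolynomial (Fin 2) R) ∈ I :=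
    Ideal.subset_span (Set.mem_insert _ _)
  have hm2 : (MvPolynomial.X 1 ^ 2 - MvPolynomial.C a₂ : MvPolynomial (Fin 2) R) ∈ I :=
    Ideal.subset_span (Set.mem_insert_of_mem _ rfl)
  induction p using MvPolynomial.induction_on with
  | C r =>
      refine ⟨r, 0, 0, 0, ?_⟩
      have : (MvPolynomial.C r : MvPolynomial (Fin 2) R) - (MvPolynomial.C r +
          MvPolynomial.C 0 * MvPolynomial.X 0 + MvPolynomial.C 0 * MvPolynomial.X 1 +
          MvPolynomial.C 0 * (MvPolynomial.X 0 * MvPolynomial.X 1)) = 0 := by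
        simp
      rw [this]; exact I.zero_mem
  | add p q hp hq =>
      obtain ⟨α, β, γ, δ, hp⟩ := hp
      obtain ⟨α', β', γ', δ', hq⟩ := hq
      refine ⟨α + α', β + β', γ + γ', δ + δ', ?_⟩
      have := I.add_mem hp hq
      convert this using 1
      simp only [map_add]
      ring
  | mul_X p n hp =>
      obtain ⟨α, β, γ, δ, hp⟩ := hp
      fin_cases n
      · refine ⟨β * a₁, α, δ * a₁, γ, ?_⟩
        have key : p * MvPolynomial.X 0 - (MvPolynomial.C (β * a₁) +
            MvPolynomial.C α * MvPolynomial.X 0 + MvPolynomial.C (δ * a₁) * MvPolynomial.X 1 +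
            MvPolynomial.C γ * (MvPolynomial.X 0 * MvPolynomial.X 1)) =
            (p - (MvPolynomial.C α + MvPolynomial.C β * MvPolynomial.X 0 +
              MvPolynomial.C γ * MvPolynomial.X 1 +
              MvPolynomial.C δ * (MvPolynomial.X 0 * MvPolynomial.X 1))) * MvPolynomial.X 0 +
            (MvPolynomial.C β + MvPolynomial.C δ * MvPolynomial.X 1) *
              (MvPolynomial.X 0 ^ 2 - MvPolynomial.C a₁) := by
          simp only [map_mul]
          ring
        refine key ▸ I.add_mem (I.mul_mem_right _ hp) (I.mul_mem_left _ hm1)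
      · refine ⟨γ * a₂, δ * a₂, α, β, ?_⟩
        have key : p * MvPolynomial.X 1 - (MvPolynomial.C (γ * a₂) +
            MvPolynomial.C (δ * a₂) * MvPolynomial.X 0 + MvPolynomial.C α * MvPolynomial.X 1 +
            MvPolynomial.C β * (MvPolynomial.X 0 * MvPolynomial.X 1)) =
            (p - (MvPolynomial.C α + MvPolynomial.C β * MvPolynomial.X 0 +
              MvPolynomial.C γ * MvPolynomial.X 1 +
              MvPolynomial.C δ * (MvPolynomial.X 0 * MvPolynomial.X 1))) * MvPolynomial.X 1 +
            (MvPolynomial.C γ + MvPolynomial.C δ * MvPolynomial.X 0) *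
              (MvPolynomial.X 1 ^ 2 - MvPolynomial.C a₂) := by
          simp only [map_mul]
          ring
        refine key ▸ I.add_mem (I.mul_mem_right _ hp) (I.mul_mem_left _ hm2)

lemma exists_sq_ratio (R L : Type) [CommRing R] [IsDomain R]
    [Field L] [Algebra R L] [IsFractionRing R L] (hchar : ringChar L ≠ 2)
    (a₁ a₂ : R)
    (h₁ : Irreducible (X ^ 2 - C (algebraMap R L a₁) : L[X]))
    (h₂ : Irreducible (X ^ 2 - C (algebraMap R L a₂) : L[X]))
    (hT : ¬ IsDomain (MvPolynomial (Fin 2) R ⧸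
      (Ideal.span {MvPolynomial.X 0 ^ 2 - MvPolynomial.C a₁,
        MvPolynomial.X 1 ^ 2 - MvPolynomial.C a₂} : Ideal (MvPolynomial (Fin 2) R)))) :
    ∃ q : L, algebraMap R L a₂ = q ^ 2 * algebraMap R L a₁ := by
  by_contra hqn
  push_neg at hqn
  apply hT
  set aL₁ := algebraMap R L a₁ with haL₁
  set aL₂ := algebraMap R L a₂ with haL₂
  haveI := Fact.mk h₁
  set f1 : L[X] := X ^ 2 - C aL₁ with hf1
  set K := AdjoinRoot f1 with hK
  -- 2 ≠ 0 in L
  have h2L : (2 : L) ≠ 0 := by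
    intro h
    have hdvd : ringChar L ∣ 2 := ringChar.dvd (by exact_mod_cast h)
    rcases (Nat.dvd_prime Nat.prime_two).mp hdvd with h1 | h1
    · exact CharP.ringChar_ne_one h1
    · exact hchar h1
  -- the second quadratic is irreducible over K
  have hg : Irreducible (X ^ 2 - C (AdjoinRoot.of f1 aL₂) : K[X]) := by
    rw [irr_sq_iff]
    intro t ht
    obtain ⟨x, y, rfl⟩ := repr_lemma aL₁ t
    have h0 : AdjoinRoot.of f1 (x ^ 2 + y ^ 2 * aL₁ - aL₂) +
        AdjoinRoot.of f1 (2 * x * y) * AdjoinRoot.root f1 = 0 := by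
      simp only [map_sub, map_add, map_mul, map_pow, map_ofNat]
      linear_combination ht - (AdjoinRoot.of f1 y) ^ 2 * root_sq aL₁
    obtain ⟨hA, hB⟩ := indep h₁ _ _ h0
    have hxy : x * y = 0 := by
      have : (2 : L) * (x * y) = 0 := by linear_combination hB
      exact (mul_eq_zero.mp this).resolve_left h2L
    rcases mul_eq_zero.mp hxy with hx | hy
    · exact hqn y (by rw [hx] at hA; linear_combination -hA)
    · rw [hy] at hA
      exact (irr_sq_iff aL₂).mp h₂ x (by linear_combination hA)
  haveI := Fact.mk hg
  set g : K[X] := X ^ 2 - C (AdjoinRoot.of f1 aL₂) with hg_def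
  set M := AdjoinRoot g with hM
  set ρ : R →+* M := (AdjoinRoot.of g).comp ((AdjoinRoot.of f1).comp (algebraMap R L)) with hρ
  set φ : MvPolynomial (Fin 2) R →+* M :=
    MvPolynomial.eval₂Hom ρ ![AdjoinRoot.of g (AdjoinRoot.root f1), AdjoinRoot.root g] with hφ
  set I : Ideal (MvPolynomial (Fin 2) R) := Ideal.span {MvPolynomial.X 0 ^ 2 - MvPolynomial.C a₁,
        MvPolynomial.X 1 ^ 2 - MvPolynomial.C a₂} with hI
  have hIker : I ≤ RingHom.ker φ := by
    rw [hI, Ideal.span_le]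
    rintro x (rfl | rfl)
    · have : φ (MvPolynomial.X 0 ^ 2 - MvPolynomial.C a₁) =
          (AdjoinRoot.of g (AdjoinRoot.root f1)) ^ 2 - ρ a₁ := by
        simp [hφ]
      rw [SetLike.mem_coe, RingHom.mem_ker, this, ← map_pow, root_sq]
      simp [hρ]
      exact sub_self _
    · have : φ (MvPolynomial.X 1 ^ 2 - MvPolynomial.C a₂) =
          (AdjoinRoot.root g) ^ 2 - ρ a₂ := by
        simp [hφ]
      rw [SetLike.mem_coe, RingHom.mem_ker, this]
      have hr2 : (AdjoinRoot.root g) ^ 2 = AdjoinRoot.of g (AdjoinRoot.of f1 aL₂) :=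
        root_sq (AdjoinRoot.of f1 aL₂)
      rw [hr2]
      simp [hρ]
      exact sub_self _
  have hkerI : RingHom.ker φ ≤ I := by
    intro p hp
    rw [RingHom.mem_ker] at hp
    obtain ⟨α, β, γ, δ, hnf⟩ := normal_form a₁ a₂ p
    have hφN : φ (MvPolynomial.C α + MvPolynomial.C β * MvPolynomial.X 0 +
        MvPolynomial.C γ * MvPolynomial.X 1 +
        MvPolynomial.C δ * (MvPolynomial.X 0 * MvPolynomial.X 1)) = 0 := by
      have h1' := hIker hnf
      rw [RingHom.mem_ker, map_sub, hp, zero_sub, neg_eq_zero] at h1'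
      exact h1'
    have hexp : AdjoinRoot.of g (AdjoinRoot.of f1 (algebraMap R L α) +
          AdjoinRoot.of f1 (algebraMap R L β) * AdjoinRoot.root f1) +
        AdjoinRoot.of g (AdjoinRoot.of f1 (algebraMap R L γ) +
          AdjoinRoot.of f1 (algebraMap R L δ) * AdjoinRoot.root f1) * AdjoinRoot.root g = 0 := by
      rw [← hφN]
      simp [hφ, hρ]
      ring
    obtain ⟨hA, hB⟩ := indep hg _ _ hexp
    obtain ⟨hα, hβ⟩ := indep h₁ _ _ hA
    obtain ⟨hγ, hδ⟩ := indep h₁ _ _ hB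
    have hinj := IsFractionRing.injective R L
    have hα0 : α = 0 := hinj (by rw [hα, map_zero])
    have hβ0 : β = 0 := hinj (by rw [hβ, map_zero])
    have hγ0 : γ = 0 := hinj (by rw [hγ, map_zero])
    have hδ0 : δ = 0 := hinj (by rw [hδ, map_zero])
    rw [hα0, hβ0, hγ0, hδ0] at hnf
    simpa using hnf
  have hprime : I.IsPrime := by
    have heq : I = RingHom.ker φ := le_antisymm hIker hkerI
    rw [heq]
    exact RingHom.ker_isPrime φ
  exact (Ideal.Quotient.isDomain_iff_prime I).mpr hprime

/-- Let `R` be a UFD whose fraction field `L` has characteristic `≠ 2`.  Let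
`a₁, a₂ ∈ R` and suppose `fᵢ = xᵢ² − aᵢ` is irreducible in `L[xᵢ]` for `i = 1, 2`.
If `T = R[x₁,x₂]/(f₁, f₂)` is not an integral domain, then there exist nonzero
`c, d, u ∈ R` with `a₁ = d²u`, `a₂ = c²u` and `c, d` relatively prime. -/
theorem stmt1 (R L : Type) [CommRing R] [IsDomain R] [UniqueFactorizationMonoid R]
    [Field L] [Algebra R L] [IsFractionRing R L] (hchar : ringChar L ≠ 2)
    (a₁ a₂ : R)
    (h₁ : Irreducible (X ^ 2 - C (algebraMap R L a₁) : L[X]))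
    (h₂ : Irreducible (X ^ 2 - C (algebraMap R L a₂) : L[X]))
    (hT : ¬ IsDomain (MvPolynomial (Fin 2) R ⧸
      (Ideal.span {MvPolynomial.X 0 ^ 2 - MvPolynomial.C a₁,
        MvPolynomial.X 1 ^ 2 - MvPolynomial.C a₂} : Ideal (MvPolynomial (Fin 2) R)))) :
    ∃ c d u : R, c ≠ 0 ∧ d ≠ 0 ∧ u ≠ 0 ∧
      a₁ = d ^ 2 * u ∧ a₂ = c ^ 2 * u ∧ IsRelPrime c d := by
  obtain ⟨q, hq⟩ := exists_sq_ratio R L hchar a₁ a₂ h₁ h₂ hT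
  have hinj := IsFractionRing.injective R L
  have ha₁L : algebraMap R L a₁ ≠ 0 := fun h => (irr_sq_iff _).mp h₁ 0 (by simp [h])
  have ha₂L : algebraMap R L a₂ ≠ 0 := fun h => (irr_sq_iff _).mp h₂ 0 (by simp [h])
  have ha₁ : a₁ ≠ 0 := fun h => ha₁L (by rw [h, map_zero])
  have ha₂ : a₂ ≠ 0 := fun h => ha₂L (by rw [h, map_zero])
  have hq0 : q ≠ 0 := by
    intro h
    rw [h] at hq
    norm_num at hq
    exact ha₂ hq
  set c := IsFractionRing.num R q with hc
  set d := (IsFractionRing.den R q : R) with hd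
  have hd0 : d ≠ 0 := nonZeroDivisors.coe_ne_zero _
  have hrel : IsRelPrime c d := IsFractionRing.num_den_reduced R q
  have hdL : algebraMap R L d ≠ 0 := fun h => hd0 (hinj (by rw [h, map_zero]))
  have hqcd : q * algebraMap R L d = algebraMap R L c := by
    have := IsFractionRing.mk'_num_den' R q
    rw [← hc, ← hd] at this
    field_simp [hdL] at this
    exact (mul_comm _ _).trans this.symm
  have key : a₂ * d ^ 2 = a₁ * c ^ 2 := by
    apply hinj
    simp only [map_mul, map_pow]
    linear_combination (algebraMap R L d) ^ 2 * hq +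
      (algebraMap R L a₁) * (q * algebraMap R L d + algebraMap R L c) * hqcd
  have hc0 : c ≠ 0 := by
    intro h
    have : q * algebraMap R L d = 0 := by rw [hqcd, h, map_zero]
    exact hq0 ((mul_eq_zero.mp this).resolve_right hdL)
  have hdvd : d ^ 2 ∣ a₁ := by
    have h1 : d ^ 2 ∣ a₁ * c ^ 2 := ⟨a₂, by linear_combination -key⟩
    exact (hrel.symm.pow (n := 2) (m := 2)).dvd_of_dvd_mul_right h1
  obtain ⟨u, hu⟩ := hdvd
  have hu0 : u ≠ 0 := by
    intro h
    rw [h, mul_zero] at hu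
    exact ha₁ hu
  have ha₂u : a₂ = c ^ 2 * u := by
    apply mul_left_cancel₀ (pow_ne_zero 2 hd0)
    linear_combination key + c ^ 2 * hu
  exact ⟨c, d, u, hc0, hd0, hu0, hu, ha₂u, hrel⟩
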